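/- Let G = (V,A) be a finite simple graph without isolated vertices and n = n(G) = W ⊕ z its graph algebra over a field k of characteristic zero. Let δ : n → Λ²n be any linear map with δ(z) = 0 for z ∈ z and δ(e_i) ∈ Λ²z for every vertex i, i.e. δ(e_i) = Σ_{α,β∈A} μ_i^{α,β} α∧β with arbitrary coefficients satisfying μ_i^{α,β} = −μ_i^{β,α}. Then δ is a Lie bialgebra structure on n, and it is nearly coboundary. -/

import Mathlib

open TensorProduct

set_option synthInstance.maxHeartbeats 1000000
set_option maxHeartbeats 1000000

/-- The adjoint action of a Lie algebra `g` on `g ⊗ g`, determined by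
`x · (a ⊗ b) = ⁅x,a⁆ ⊗ b + a ⊗ ⁅x,b⁆`. -/
noncomputable def tAct (k g : Type*) [CommRing k] [LieRing g] [LieAlgebra k g] (x : g) :
    g ⊗[k] g →ₗ[k] g ⊗[k] g :=
  TensorProduct.map (LieAlgebra.ad k g x) LinearMap.id
    + TensorProduct.map LinearMap.id (LieAlgebra.ad k g x)

/-- The cyclic rotation `(a⊗b)⊗c ↦ (c⊗a)⊗b` on `(g⊗g)⊗g`. -/
noncomputable def tCyc (k g : Type*) [CommRing k] [AddCommGroup g] [Module k g] :
    (g ⊗[k] g) ⊗[k] g →ₗ[k] (g ⊗[k] g) ⊗[k] g :=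
  ((TensorProduct.assoc k g g g).symm.toLinearMap).comp
    (TensorProduct.comm k (g ⊗[k] g) g).toLinearMap

/-- for the graph algebra `n = n(G) = W ⊕ z` of a finite simple graph
without isolated vertices, any linear map `δ : n → Λ²n` vanishing on `z` and with
`δ(e_i) = Σ_{α,β} μ_i^{α,β} α∧β ∈ Λ²z` (coefficients only required to satisfy
`μ_i^{α,β} = −μ_i^{β,α}`; each wedge `α∧β` modelled as `α⊗β − β⊗α`) is a Lie bialgebra
structure on `n`, and it is nearly coboundary. -/
theorem stmt14 (k V A N : Type*) [Field k] [CharZero k]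
    [Fintype V] [Fintype A] [DecidableEq V] [DecidableEq A]
    [LieRing N] [LieAlgebra k N]
    (src tgt : A → V)
    (hloop : ∀ a, src a ≠ tgt a)
    (hsimple : ∀ a b : A,
      (src a = src b ∧ tgt a = tgt b) ∨ (src a = tgt b ∧ tgt a = src b) → a = b)
    (B : Module.Basis (V ⊕ A) k N)
    (hbz : ∀ (a : A) (x : N), ⁅B (Sum.inr a), x⁆ = 0)
    (hbe : ∀ a : A, ⁅B (Sum.inl (src a)), B (Sum.inl (tgt a))⁆ = B (Sum.inr a))
    (hbe0 : ∀ i j : V,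
      (∀ a : A, ¬((src a = i ∧ tgt a = j) ∨ (src a = j ∧ tgt a = i))) →
      ⁅B (Sum.inl i), B (Sum.inl j)⁆ = 0)
    (hnoiso : ∀ e : V,
      0 < (Finset.univ.filter (fun a : A => src a = e ∨ tgt a = e)).card)
    (μ : V → A → A → k)
    (hμanti : ∀ i a b, μ i a b = - μ i b a)
    (δ : N →ₗ[k] N ⊗[k] N)
    (hδz : ∀ z ∈ Submodule.span k (Set.range fun a : A => B (Sum.inr a)), δ z = 0)
    (hδe : ∀ i : V, δ (B (Sum.inl i)) = ∑ a : A, ∑ b : A,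
      μ i a b • (B (Sum.inr a) ⊗ₜ[k] B (Sum.inr b) - B (Sum.inr b) ⊗ₜ[k] B (Sum.inr a))) :
    -- δ is a Lie bialgebra structure on n:
    ((∀ x, TensorProduct.comm k N N (δ x) = - δ x)
      ∧ (∀ x, (TensorProduct.map δ LinearMap.id) (δ x)
          + tCyc k N ((TensorProduct.map δ LinearMap.id) (δ x))
          + tCyc k N (tCyc k N ((TensorProduct.map δ LinearMap.id) (δ x))) = 0)
      ∧ (∀ x y, δ ⁅x, y⁆ = tAct k N x (δ y) - tAct k N y (δ x)))
    -- and it is nearly coboundary: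
    ∧ (∀ z ∈ Submodule.span k (Set.range fun a : A => B (Sum.inr a)), δ z = 0) := by

  classical
  -- central elements bracket to zero on both sides
  have hzc : ∀ (a : A) (x : N), ⁅x, B (Sum.inr a)⁆ = 0 := by
    intro a x; rw [← lie_skew, hbz, neg_zero]
  have hδza : ∀ a : A, δ (B (Sum.inr a)) = 0 := fun a =>
    hδz _ (Submodule.subset_span ⟨a, rfl⟩)
  -- δ lands in the span of central ⊗ central
  set S : Set (N ⊗[k] N) :=
    {t | ∃ a b : A, t = B (Sum.inr a) ⊗ₜ[k] B (Sum.inr b)} with hS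
  have hZ : ∀ x : N, δ x ∈ Submodule.span k S := by
    intro x
    have hx : x ∈ Submodule.span k (Set.range B) := by
      rw [B.span_eq]; trivial
    refine Submodule.span_induction (p := fun x _ => δ x ∈ Submodule.span k S)
      ?_ ?_ ?_ ?_ hx
    · rintro _ ⟨v, rfl⟩
      cases v with
      | inl i =>
        rw [hδe i]
        refine Submodule.sum_mem _ fun a _ => Submodule.sum_mem _ fun b _ =>
          Submodule.smul_mem _ _ (Submodule.sub_mem _
            (Submodule.subset_span ⟨a, b, rfl⟩) (Submodule.subset_span ⟨b, a, rfl⟩))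
      | inr a => rw [hδza a]; exact Submodule.zero_mem _
    · simp
    · intro x y _ _ hx hy; rw [map_add]; exact Submodule.add_mem _ hx hy
    · intro c x _ hx; rw [map_smul]; exact Submodule.smul_mem _ _ hx
  -- any linear map vanishing on S vanishes on δ x
  have hvan : ∀ (P : Type _) [AddCommGroup P] [Module k P] (L : N ⊗[k] N →ₗ[k] P),
      (∀ t ∈ S, L t = 0) → ∀ x : N, L (δ x) = 0 := by
    intro P _ _ L hL x
    refine Submodule.span_induction (p := fun t _ => L t = 0) hL (map_zero L)
      ?_ ?_ (hZ x)
    · intro a b _ _ ha hb; rw [map_add, ha, hb, add_zero]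
    · intro c t _ ht; rw [map_smul, ht, smul_zero]
  -- brackets land in the center span
  have hbr : ∀ x y : N, ⁅x, y⁆ ∈
      Submodule.span k (Set.range fun a : A => B (Sum.inr a)) := by
    have key : ∀ v w : V ⊕ A, ⁅B v, B w⁆ ∈
        Submodule.span k (Set.range fun a : A => B (Sum.inr a)) := by
      intro v w
      cases v with
      | inr a => rw [hbz]; exact Submodule.zero_mem _
      | inl i =>
        cases w with
        | inr a => rw [hzc]; exact Submodule.zero_mem _
        | inl j =>
          by_cases h : ∃ a : A, (src a = i ∧ tgt a = j) ∨ (src a = j ∧ tgt a = i)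
          · obtain ⟨a, h | h⟩ := h
            · rw [← h.1, ← h.2, hbe]
              exact Submodule.subset_span ⟨a, rfl⟩
            · rw [← h.2, ← h.1, ← lie_skew, hbe]
              exact Submodule.neg_mem _ (Submodule.subset_span ⟨a, rfl⟩)
          · rw [hbe0 i j (not_exists.mp h)]; exact Submodule.zero_mem _
    intro x y
    have hx : x ∈ Submodule.span k (Set.range B) := by rw [B.span_eq]; trivial
    refine Submodule.span_induction (p := fun x _ => ⁅x, y⁆ ∈ _) ?_ ?_ ?_ ?_ hx
    · rintro _ ⟨v, rfl⟩
      have hy : y ∈ Submodule.span k (Set.range B) := by rw [B.span_eq]; trivial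
      refine Submodule.span_induction (p := fun y _ => ⁅B v, y⁆ ∈ _) ?_ ?_ ?_ ?_ hy
      · rintro _ ⟨w, rfl⟩; exact key v w
      · simp
      · intro a b _ _ ha hb; rw [lie_add]; exact Submodule.add_mem _ ha hb
      · intro c t _ ht; rw [lie_smul]; exact Submodule.smul_mem _ _ ht
    · simp
    · intro a b _ _ ha hb; rw [add_lie]; exact Submodule.add_mem _ ha hb
    · intro c t _ ht; rw [smul_lie]; exact Submodule.smul_mem _ _ ht
  refine ⟨⟨?_, ?_, ?_⟩, hδz⟩
  · -- antisymmetry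
    have hmain : ((TensorProduct.comm k N N).toLinearMap.comp (δ : N →ₗ[k] N ⊗[k] N)
        + δ) = 0 := by
      apply B.ext
      intro v
      cases v with
      | inr a => simp [hδza a]
      | inl i =>
        simp only [LinearMap.add_apply, LinearMap.coe_comp, Function.comp_apply,
          LinearEquiv.coe_coe, hδe i, map_sum, map_smul, map_sub,
          TensorProduct.comm_tmul, LinearMap.zero_apply, smul_sub]
        rw [← Finset.sum_add_distrib]
        refine Finset.sum_eq_zero fun a _ => ?_
        rw [← Finset.sum_add_distrib]
        refine Finset.sum_eq_zero fun b _ => ?_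
        abel
    intro x
    have := congrArg (fun f => f x) hmain
    simp only [LinearMap.add_apply, LinearMap.coe_comp, Function.comp_apply,
      LinearEquiv.coe_coe, LinearMap.zero_apply] at this
    exact eq_neg_of_add_eq_zero_left this
  · -- co-Jacobi
    intro x
    have h0 : (TensorProduct.map δ LinearMap.id) (δ x) = 0 := by
      refine hvan _ _ ?_ x
      rintro _ ⟨a, b, rfl⟩
      simp [TensorProduct.map_tmul, hδza a]
    rw [h0]; simp
  · -- cocycle
    intro x y
    have h1 : ∀ z w : N, tAct k N z (δ w) = 0 := by
      intro z w
      refine hvan _ (tAct k N z) ?_ w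
      rintro _ ⟨a, b, rfl⟩
      simp [tAct, TensorProduct.map_tmul, LieAlgebra.ad_apply, hzc]
    rw [h1 x y, h1 y x, sub_zero]
    exact hδz _ (hbr x y)
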